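/- Let Λ_i: ℝ → (0,1) be increasing and w_i continuous capacities, i = 1,…,n, and let X be a random variable with ΛᵢVaR^{w_i}(X) ≥ 0 for all i. Then the comonotonic inf-convolution over increasing continuous functions f₁,…,f_n with f₁+⋯+f_n = id and f_i(0) = 0 satisfies: inf{ Σ_{i=1}^n ΛᵢVaR^{w_i}(f_i(X)) } = min_{i=1,…,n} ΛᵢVaR^{w_i}(X), and the infimum is attained by taking f_{i₀} = id for some minimizing index i₀ and f_i = 0 for i ≠ i₀. -/

import Mathlib

open Set Filter

/-- Lambda Value-at-Risk of `X` with respect to a capacity `w` and function `Λ`: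
`inf {x ∈ ℝ : w(X > x) ≤ Λ(x)}`, valued in the extended reals (`inf ∅ = ⊤`). -/
noncomputable def LVaR {Ω : Type*} (w : Set Ω → ℝ) (Λ : ℝ → ℝ) (X : Ω → ℝ) : EReal :=
  sInf ((fun x : ℝ => (x : EReal)) '' {x : ℝ | w {ω | x < X ω} ≤ Λ x})

lemma LVaR_le {Ω : Type*} {w : Set Ω → ℝ} {Λ : ℝ → ℝ} {X : Ω → ℝ} {x : ℝ}
    (h : w {ω | x < X ω} ≤ Λ x) : LVaR w Λ X ≤ (x : EReal) :=
  sInf_le ⟨x, h, rfl⟩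

/-- `LVaR` of the constant `0` random variable is `0`. -/
lemma LVaR_zero {Ω : Type*} [Nonempty Ω] (w : Set Ω → ℝ) (Λ : ℝ → ℝ)
    (hw_empty : w (∅ : Set Ω) = 0) (hw_univ : w (univ : Set Ω) = 1)
    (hΛ_range : ∀ x, Λ x ∈ Ioo (0 : ℝ) 1) :
    LVaR w Λ (fun _ => (0 : ℝ)) = 0 := by
  have hset : {x : ℝ | w {ω : Ω | x < 0} ≤ Λ x} = Ici 0 := by
    ext x
    simp only [mem_setOf_eq, mem_Ici]
    constructor
    · intro h
      by_contra hx
      push_neg at hx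
      have huniv : {ω : Ω | x < 0} = univ := eq_univ_of_forall fun ω => hx
      rw [huniv, hw_univ] at h
      exact absurd (lt_of_le_of_lt h (hΛ_range x).2) (lt_irrefl 1)
    · intro h
      have hempty : {ω : Ω | x < 0} = ∅ := by
        apply eq_empty_iff_forall_notMem.mpr
        intro ω hω
        exact absurd h (not_le.2 hω)
      rw [hempty, hw_empty]
      exact (hΛ_range x).1.le
  rw [LVaR, hset]
  apply le_antisymm
  · exact sInf_le ⟨0, mem_Ici.mpr le_rfl, EReal.coe_zero⟩
  · apply le_sInf
    rintro y ⟨x, hx, rfl⟩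
    exact EReal.coe_nonneg.mpr hx

section Main

variable {Ω : Type*} {n : ℕ}

/-- If the total `ΛVaR` is nonnegative, every feasible point for `ΛVaR(fᵢ(X))` is
nonnegative, where `(fᵢ)` is a comonotonic allocation with `fᵢ(0)=0`. -/
lemma feasible_nonneg [Nonempty Ω]
    (w : Fin n → Set Ω → ℝ) (Λ : Fin n → ℝ → ℝ)
    (hw_mono : ∀ i, ∀ A B : Set Ω, A ⊆ B → w i A ≤ w i B)
    (hw_univ : ∀ i, w i (univ : Set Ω) = 1)
    (hΛ_range : ∀ i x, Λ i x ∈ Ioo (0 : ℝ) 1)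
    (X : Ω → ℝ) (hpos : ∀ i, (0 : EReal) ≤ LVaR (w i) (Λ i) X)
    (f : Fin n → ℝ → ℝ)
    (hf_mono : ∀ i, Monotone (f i)) (hf_cont : ∀ i, Continuous (f i))
    (hf0 : ∀ i, f i 0 = 0) (hsum : ∀ x : ℝ, ∑ i, f i x = x)
    (j : Fin n) {x : ℝ} (hx : w j {ω | x < f j (X ω)} ≤ Λ j x) :
    0 ≤ x := by
  by_contra hneg
  push_neg at hneg
  set D := {t : ℝ | f j t ≤ x} with hD
  have hDne : D.Nonempty := by
    by_contra hDe
    push_neg at hDe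
    have huniv : {ω : Ω | x < f j (X ω)} = univ := by
      apply eq_univ_of_forall
      intro ω
      by_contra hc
      simp only [mem_setOf_eq, not_lt] at hc
      exact absurd (show X ω ∈ D from hc) (by rw [hDe]; exact notMem_empty _)
    rw [huniv, hw_univ j] at hx
    exact absurd (lt_of_le_of_lt hx (hΛ_range j x).2) (lt_irrefl 1)
  have hDbdd : BddAbove D := by
    refine ⟨0, fun t ht => ?_⟩
    by_contra hts
    push_neg at hts
    have : (0:ℝ) ≤ f j t := by rw [← hf0 j]; exact hf_mono j hts.le
    exact absurd (lt_of_le_of_lt (this.trans ht) hneg) (lt_irrefl 0)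
  have hDclosed : IsClosed D := isClosed_le (hf_cont j) continuous_const
  have htmem : sSup D ∈ D := hDclosed.csSup_mem hDne hDbdd
  have ht0 : sSup D ≤ 0 := by
    by_contra hc
    push_neg at hc
    have : (0:ℝ) ≤ f j (sSup D) := by rw [← hf0 j]; exact hf_mono j hc.le
    exact absurd (lt_of_le_of_lt (this.trans htmem) hneg) (lt_irrefl 0)
  have hge : sSup D ≤ f j (sSup D) := by
    have h1 : ∑ i, f i (sSup D) = sSup D := hsum (sSup D)
    have h2 : f j (sSup D) + ∑ i ∈ Finset.univ.erase j, f i (sSup D) = ∑ i, f i (sSup D) :=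
      Finset.add_sum_erase Finset.univ (fun i => f i (sSup D)) (Finset.mem_univ j)
    have h3 : ∑ i ∈ Finset.univ.erase j, f i (sSup D) ≤ 0 := by
      apply Finset.sum_nonpos
      intro i _
      rw [← hf0 i]
      exact hf_mono i ht0
    linarith
  have htx : sSup D ≤ x := hge.trans htmem
  have hsub : {ω : Ω | x < X ω} ⊆ {ω : Ω | x < f j (X ω)} := by
    intro ω hω
    simp only [mem_setOf_eq] at hω ⊢
    by_contra hc
    push_neg at hc
    exact absurd (lt_of_le_of_lt (le_csSup hDbdd (show X ω ∈ D from hc)) (htx.trans_lt hω))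
      (lt_irrefl _)
  have hle : LVaR (w j) (Λ j) X ≤ (x : EReal) :=
    LVaR_le (le_trans (hw_mono j _ _ hsub) hx)
  exact absurd (EReal.coe_nonneg.mp ((hpos j).trans hle)) (not_le.2 hneg)

/-- Core inequality: any tuple of feasible points for the allocated risks sums to at
least the minimum `ΛVaR`. -/
lemma core_ineq [Nonempty Ω]
    (w : Fin n → Set Ω → ℝ) (Λ : Fin n → ℝ → ℝ)
    (hw_mono : ∀ i, ∀ A B : Set Ω, A ⊆ B → w i A ≤ w i B)
    (hw_univ : ∀ i, w i (univ : Set Ω) = 1)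
    (hΛ_mono : ∀ i, Monotone (Λ i)) (hΛ_range : ∀ i x, Λ i x ∈ Ioo (0 : ℝ) 1)
    (X : Ω → ℝ) (hpos : ∀ i, (0 : EReal) ≤ LVaR (w i) (Λ i) X)
    (f : Fin n → ℝ → ℝ)
    (hf_mono : ∀ i, Monotone (f i)) (hf_cont : ∀ i, Continuous (f i))
    (hf0 : ∀ i, f i 0 = 0) (hsum : ∀ x : ℝ, ∑ i, f i x = x)
    (x : Fin n → ℝ) (hx : ∀ j, w j {ω | x j < f j (X ω)} ≤ Λ j (x j)) :
    (⨅ i, LVaR (w i) (Λ i) X) ≤ ((∑ j, x j : ℝ) : EReal) := by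
  classical
  have hx0 : ∀ j, 0 ≤ x j := fun j =>
    feasible_nonneg w Λ hw_mono hw_univ hΛ_range X hpos f hf_mono hf_cont hf0 hsum j (hx j)
  set D : Fin n → Set ℝ := fun j => {t | f j t ≤ x j} with hDdef
  have hD0 : ∀ j, (0:ℝ) ∈ D j := fun j => by
    show f j 0 ≤ x j
    rw [hf0 j]; exact hx0 j
  have hunbdd : ∀ j, ¬ BddAbove (D j) → ∀ s : ℝ, f j s ≤ x j := by
    intro j h s
    by_contra hc
    push_neg at hc
    refine h ⟨s, fun t ht => ?_⟩
    by_contra hts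
    push_neg at hts
    exact absurd (le_trans (hf_mono j hts.le) ht) (not_le.2 hc)
  have hex : ∃ j, BddAbove (D j) := by
    by_contra h
    push_neg at h
    have hall : ∀ s : ℝ, s ≤ ∑ j, x j := by
      intro s
      calc s = ∑ j, f j s := (hsum s).symm
        _ ≤ ∑ j, x j := Finset.sum_le_sum fun j _ => hunbdd j (h j) s
    linarith [hall (∑ j, x j + 1)]
  set B : Finset (Fin n) := Finset.univ.filter (fun j => BddAbove (D j)) with hBdef
  have hBne : B.Nonempty := by
    obtain ⟨j, hj⟩ := hex
    exact ⟨j, Finset.mem_filter.mpr ⟨Finset.mem_univ j, hj⟩⟩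
  obtain ⟨i₀, hi₀B, hmin⟩ := Finset.exists_min_image B (fun j => sSup (D j)) hBne
  have hi₀bdd : BddAbove (D i₀) := (Finset.mem_filter.mp hi₀B).2
  have hclosed : ∀ j, IsClosed (D j) := fun j => isClosed_le (hf_cont j) continuous_const
  have hmem : ∀ j, BddAbove (D j) → sSup (D j) ∈ D j := fun j hb =>
    (hclosed j).csSup_mem ⟨0, hD0 j⟩ hb
  set s₀ := sSup (D i₀) with hs₀def
  have hall : ∀ j, f j s₀ ≤ x j := by
    intro j
    by_cases hb : BddAbove (D j)
    · exact le_trans (hf_mono j (hmin j (Finset.mem_filter.mpr ⟨Finset.mem_univ j, hb⟩)))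
        (hmem j hb)
    · exact hunbdd j hb s₀
  have hs₀le : s₀ ≤ ∑ j, x j := by
    calc s₀ = ∑ j, f j s₀ := (hsum s₀).symm
      _ ≤ ∑ j, x j := Finset.sum_le_sum fun j _ => hall j
  have hxi : x i₀ ≤ ∑ j, x j := Finset.single_le_sum (fun j _ => hx0 j) (Finset.mem_univ i₀)
  have hsub : {ω : Ω | (∑ j, x j) < X ω} ⊆ {ω : Ω | x i₀ < f i₀ (X ω)} := by
    intro ω hω
    simp only [mem_setOf_eq] at hω ⊢
    by_contra hc
    push_neg at hc
    exact absurd (lt_of_le_of_lt (le_csSup hi₀bdd (show X ω ∈ D i₀ from hc))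
      (hs₀le.trans_lt hω)) (lt_irrefl _)
  have hkey : w i₀ {ω : Ω | (∑ j, x j) < X ω} ≤ Λ i₀ (∑ j, x j) :=
    le_trans (le_trans (hw_mono i₀ _ _ hsub) (hx i₀)) (hΛ_mono i₀ hxi)
  exact le_trans (iInf_le _ i₀) (LVaR_le hkey)

lemma ereal_coe_finset_sum {α : Type*} (s : Finset α) (r : α → ℝ) :
    ((∑ j ∈ s, r j : ℝ) : EReal) = ∑ j ∈ s, ((r j : ℝ) : EReal) := by
  classical
  induction s using Finset.induction with
  | empty => simp
  | insert _ _ h ih => rw [Finset.sum_insert h, Finset.sum_insert h, EReal.coe_add, ih]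

lemma ereal_le_coe_of_forall {a : EReal} {c : ℝ}
    (h : ∀ ε : ℝ, 0 < ε → a ≤ ((c + ε : ℝ) : EReal)) : a ≤ (c : EReal) := by
  induction a using EReal.rec with
  | bot => exact bot_le
  | coe b =>
    refine EReal.coe_le_coe_iff.mpr (le_of_forall_pos_le_add fun ε hε => ?_)
    exact EReal.coe_le_coe_iff.mp (h ε hε)
  | top =>
    exact absurd (top_le_iff.mp (h 1 one_pos)) (EReal.coe_ne_top _)

/-- The lower bound: any comonotonic allocation's total `ΛVaR` is at least the minimum. -/
lemma lower_bound [Nonempty Ω] (hn : 0 < n)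
    (w : Fin n → Set Ω → ℝ) (Λ : Fin n → ℝ → ℝ)
    (hw_mono : ∀ i, ∀ A B : Set Ω, A ⊆ B → w i A ≤ w i B)
    (hw_univ : ∀ i, w i (univ : Set Ω) = 1)
    (hΛ_mono : ∀ i, Monotone (Λ i)) (hΛ_range : ∀ i x, Λ i x ∈ Ioo (0 : ℝ) 1)
    (X : Ω → ℝ) (hpos : ∀ i, (0 : EReal) ≤ LVaR (w i) (Λ i) X)
    (f : Fin n → ℝ → ℝ)
    (hf_mono : ∀ i, Monotone (f i)) (hf_cont : ∀ i, Continuous (f i))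
    (hf0 : ∀ i, f i 0 = 0) (hsum : ∀ x : ℝ, ∑ i, f i x = x) :
    (⨅ i, LVaR (w i) (Λ i) X) ≤ ∑ i, LVaR (w i) (Λ i) (fun ω => f i (X ω)) := by
  classical
  set S : Fin n → Set ℝ := fun j => {x | w j {ω | x < f j (X ω)} ≤ Λ j x} with hSdef
  have hS0 : ∀ j, ∀ x ∈ S j, (0:ℝ) ≤ x := fun j x hxS =>
    feasible_nonneg w Λ hw_mono hw_univ hΛ_range X hpos f hf_mono hf_cont hf0 hsum j hxS
  have hLdef : ∀ j, LVaR (w j) (Λ j) (fun ω => f j (X ω)) =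
      sInf ((fun x : ℝ => (x : EReal)) '' S j) := fun j => rfl
  have hsnn : ∀ j, (0 : EReal) ≤ LVaR (w j) (Λ j) (fun ω => f j (X ω)) := by
    intro j
    rw [hLdef j]
    apply le_sInf
    rintro y ⟨x, hxS, rfl⟩
    exact EReal.coe_nonneg.mpr (hS0 j x hxS)
  by_cases hne : ∀ j, (S j).Nonempty
  · -- all feasible sets nonempty
    set r : Fin n → ℝ := fun j => sInf (S j) with hrdef
    have hrbdd : ∀ j, BddBelow (S j) := fun j => ⟨0, fun x hx => hS0 j x hx⟩
    have hcoe : ∀ j, ((r j : ℝ) : EReal) ≤ LVaR (w j) (Λ j) (fun ω => f j (X ω)) := by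
      intro j
      rw [hLdef j]
      apply le_sInf
      rintro y ⟨x, hxS, rfl⟩
      exact EReal.coe_le_coe_iff.mpr (csInf_le (hrbdd j) hxS)
    have hstep : (⨅ i, LVaR (w i) (Λ i) X) ≤ ((∑ j, r j : ℝ) : EReal) := by
      apply ereal_le_coe_of_forall
      intro ε hε
      have hεn : 0 < ε / n := div_pos hε (by exact_mod_cast hn)
      have hchoice : ∀ j, ∃ x ∈ S j, x < r j + ε / n := by
        intro j
        apply exists_lt_of_csInf_lt (hne j)
        linarith
      choose xx hxxS hxxlt using hchoice
      have h1 : (⨅ i, LVaR (w i) (Λ i) X) ≤ ((∑ j, xx j : ℝ) : EReal) :=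
        core_ineq w Λ hw_mono hw_univ hΛ_mono hΛ_range X hpos f hf_mono hf_cont hf0 hsum
          xx (fun j => hxxS j)
      refine h1.trans (EReal.coe_le_coe_iff.mpr ?_)
      have h2 : ∑ j, xx j ≤ ∑ j, (r j + ε / n) :=
        Finset.sum_le_sum fun j _ => (hxxlt j).le
      have h3 : ∑ j : Fin n, (r j + ε / n) = (∑ j, r j) + ε := by
        rw [Finset.sum_add_distrib, Finset.sum_const, Finset.card_univ, Fintype.card_fin,
          nsmul_eq_mul]
        have : (n : ℝ) ≠ 0 := by positivity
        field_simp
      linarith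
    calc (⨅ i, LVaR (w i) (Λ i) X) ≤ ((∑ j, r j : ℝ) : EReal) := hstep
      _ = ∑ j, ((r j : ℝ) : EReal) := ereal_coe_finset_sum _ _
      _ ≤ ∑ j, LVaR (w j) (Λ j) (fun ω => f j (X ω)) :=
          Finset.sum_le_sum fun j _ => hcoe j
  · -- some feasible set is empty: that `LVaR` is `⊤`
    push_neg at hne
    obtain ⟨k, hk⟩ := hne
    have htop : LVaR (w k) (Λ k) (fun ω => f k (X ω)) = ⊤ := by
      rw [hLdef k, hk, Set.image_empty, sInf_empty]
    have hsumtop : ∑ j, LVaR (w j) (Λ j) (fun ω => f j (X ω)) = ⊤ := by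
      rw [← Finset.add_sum_erase Finset.univ _ (Finset.mem_univ k), htop]
      apply EReal.top_add_of_ne_bot
      have : (0 : EReal) ≤ ∑ j ∈ Finset.univ.erase k, LVaR (w j) (Λ j) (fun ω => f j (X ω)) :=
        Finset.sum_nonneg fun j _ => hsnn j
      intro hbot
      rw [hbot] at this
      exact absurd this (by simp)
    rw [hsumtop]
    exact le_top

end Main

/-- Comonotonic risk sharing for `ΛᵢVaR^{wᵢ}` with increasing `Λᵢ` and continuous
capacities `wᵢ`, when all `ΛᵢVaR^{wᵢ}(X) ≥ 0`: the comonotonic inf-convolution equals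
`minᵢ ΛᵢVaR^{wᵢ}(X)` and is attained by giving the whole risk to a minimizing agent. -/
theorem stmt_19 {Ω : Type*} (n : ℕ) (hn : 0 < n)
    (w : Fin n → Set Ω → ℝ) (Λ : Fin n → ℝ → ℝ)
    (hw_mono : ∀ i, ∀ A B : Set Ω, A ⊆ B → w i A ≤ w i B)
    (hw_empty : ∀ i, w i (∅ : Set Ω) = 0) (hw_univ : ∀ i, w i (univ : Set Ω) = 1)
    (hw_cont : ∀ i, ∀ A : ℕ → Set Ω, (∀ k, A (k + 1) ⊆ A k) → (⋂ k, A k) = ∅ →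
      Tendsto (fun k => w i (A k)) atTop (nhds 0))
    (hΛ_mono : ∀ i, Monotone (Λ i)) (hΛ_range : ∀ i x, Λ i x ∈ Ioo (0 : ℝ) 1)
    (X : Ω → ℝ) (hpos : ∀ i, (0 : EReal) ≤ LVaR (w i) (Λ i) X) :
    (sInf {s : EReal | ∃ f : Fin n → ℝ → ℝ,
        (∀ i, Monotone (f i)) ∧ (∀ i, Continuous (f i)) ∧ (∀ i, f i 0 = 0) ∧
        (∀ x : ℝ, ∑ i, f i x = x) ∧
        s = ∑ i, LVaR (w i) (Λ i) (fun ω => f i (X ω))} =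
      ⨅ i, LVaR (w i) (Λ i) X) ∧
    ∃ i₀ : Fin n,
      LVaR (w i₀) (Λ i₀) X = (⨅ i, LVaR (w i) (Λ i) X) ∧
      (∑ i, LVaR (w i) (Λ i) (fun ω => if i = i₀ then X ω else 0)) =
        ⨅ i, LVaR (w i) (Λ i) X := by
  classical
  rcases isEmpty_or_nonempty Ω with hΩ | hΩ
  · exfalso
    have h1 : (univ : Set Ω) = ∅ := Set.univ_eq_empty_iff.mpr hΩ
    have := hw_univ ⟨0, hn⟩
    rw [h1, hw_empty ⟨0, hn⟩] at this
    norm_num at this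
  haveI : Nonempty (Fin n) := ⟨⟨0, hn⟩⟩
  obtain ⟨i₀, hi₀⟩ := Finite.exists_min (fun i => LVaR (w i) (Λ i) X)
  have hmineq : LVaR (w i₀) (Λ i₀) X = ⨅ i, LVaR (w i) (Λ i) X :=
    le_antisymm (le_iInf hi₀) (iInf_le _ i₀)
  -- the indicator allocation
  set g : Fin n → ℝ → ℝ := fun i x => if i = i₀ then x else 0 with hgdef
  have hg_mono : ∀ i, Monotone (g i) := by
    intro i a b hab
    simp only [hgdef]
    split_ifs
    · exact hab
    · exact le_rfl
  have hg_cont : ∀ i, Continuous (g i) := by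
    intro i
    simp only [hgdef]
    split_ifs
    · exact continuous_id
    · exact continuous_const
  have hg0 : ∀ i, g i 0 = 0 := by
    intro i
    simp only [hgdef, ite_self]
  have hgsum : ∀ x : ℝ, ∑ i, g i x = x := by
    intro x
    simp only [hgdef]
    rw [Finset.sum_ite_eq' Finset.univ i₀ (fun _ => x)]
    simp
  have hterm : ∀ i, LVaR (w i) (Λ i) (fun ω => if i = i₀ then X ω else 0) =
      if i = i₀ then LVaR (w i₀) (Λ i₀) X else 0 := by
    intro i
    by_cases h : i = i₀
    · rw [if_pos h]
      have heq : (fun ω : Ω => if i = i₀ then X ω else 0) = X := funext fun ω => if_pos h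
      rw [heq, h]
    · rw [if_neg h]
      have heq : (fun ω : Ω => if i = i₀ then X ω else 0) = fun _ => (0:ℝ) :=
        funext fun ω => if_neg h
      rw [heq]
      exact LVaR_zero (w i) (Λ i) (hw_empty i) (hw_univ i) (hΛ_range i)
  have hgsumval : (∑ i, LVaR (w i) (Λ i) (fun ω => if i = i₀ then X ω else 0)) =
      LVaR (w i₀) (Λ i₀) X := by
    rw [Finset.sum_congr rfl (fun i _ => hterm i)]
    rw [Finset.sum_ite_eq' Finset.univ i₀ (fun _ => LVaR (w i₀) (Λ i₀) X)]
    simp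
  constructor
  · apply le_antisymm
    · apply sInf_le
      refine ⟨g, hg_mono, hg_cont, hg0, hgsum, ?_⟩
      have : (∑ i, LVaR (w i) (Λ i) (fun ω => g i (X ω))) =
          ∑ i, LVaR (w i) (Λ i) (fun ω => if i = i₀ then X ω else 0) := rfl
      rw [this, hgsumval, hmineq]
    · apply le_sInf
      rintro s ⟨f, hm, hc, h0, hs, rfl⟩
      exact lower_bound hn w Λ hw_mono hw_univ hΛ_mono hΛ_range X hpos f hm hc h0 hs
  · exact ⟨i₀, hmineq, hgsumval.trans hmineq⟩
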